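/- For an integer m ≥ 1, t > 0 and ρ > 0, define h̄_t^(m)(ρ) = ∫_ρ^∞ (sinh s / √(cosh s − cosh ρ)) · (s/(t·sinh s))^m · exp(−s²/(2t)) ds. Then for every integer m ≥ 1 and every t > 0, the ratio (t·sinh(ρ) · h̄_t^(m+1)(ρ)) / (ρ · h̄_t^(m)(ρ)) tends to 1 as ρ → +∞. -/

import Mathlib

open Real Filter MeasureTheory

/-- The even-dimensional heat-kernel auxiliary function
`h̄_t^(m)(ρ) = ∫_ρ^∞ (sinh s/√(cosh s − cosh ρ)) (s/(t sinh s))^m exp(−s²/(2t)) ds`. -/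
noncomputable def hbar (m : ℕ) (t ρ : ℝ) : ℝ :=
  ∫ s in Set.Ioi ρ,
    (Real.sinh s / Real.sqrt (Real.cosh s - Real.cosh ρ)) *
      (s / (t * Real.sinh s)) ^ m * Real.exp (-s ^ 2 / (2 * t))


private lemma self_le_sinh' {x : ℝ} (hx : 0 ≤ x) : x ≤ Real.sinh x := by
  rcases eq_or_lt_of_le hx with h | h
  · simp [← h]
  · exact (Real.self_lt_sinh_iff.2 h).le

private lemma sinh_nonneg' {x : ℝ} (hx : 0 ≤ x) : 0 ≤ Real.sinh x := by
  simpa using Real.sinh_le_sinh.2 hx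

private lemma sinh_le_mul_cosh {x : ℝ} (hx : 0 ≤ x) : Real.sinh x ≤ x * Real.cosh x := by
  have hmono : MonotoneOn (fun y : ℝ => y * Real.cosh y - Real.sinh y) (Set.Ici 0) := by
    apply monotoneOn_of_deriv_nonneg (convex_Ici 0)
    · fun_prop
    · intro y hy
      exact (((hasDerivAt_id y).mul (Real.hasDerivAt_cosh y)).sub
        (Real.hasDerivAt_sinh y)).differentiableAt.differentiableWithinAt
    · intro y hy
      rw [interior_Ici] at hy
      have hd : HasDerivAt (fun y : ℝ => y * Real.cosh y - Real.sinh y)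
          (1 * Real.cosh y + y * Real.sinh y - Real.cosh y) y :=
        ((hasDerivAt_id y).mul (Real.hasDerivAt_cosh y)).sub (Real.hasDerivAt_sinh y)
      rw [hd.deriv]
      have h1 : 0 ≤ Real.sinh y := sinh_nonneg' (le_of_lt hy)
      nlinarith [le_of_lt (Set.mem_Ioi.mp hy)]
  have := hmono Set.self_mem_Ici hx hx
  simpa using this

private lemma cosh_sub_one_le {u : ℝ} (hu : 0 ≤ u) : Real.cosh u - 1 ≤ u * Real.sinh u := by
  have h1 : Real.cosh u = Real.cosh (u/2) ^ 2 + Real.sinh (u/2) ^ 2 := by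
    rw [← Real.cosh_two_mul]; ring_nf
  have h2 : Real.sinh u = 2 * Real.sinh (u/2) * Real.cosh (u/2) := by
    rw [← Real.sinh_two_mul]; ring_nf
  have h3 : Real.cosh (u/2) ^ 2 - Real.sinh (u/2) ^ 2 = 1 := Real.cosh_sq_sub_sinh_sq _
  have h4 : Real.sinh (u/2) ≤ (u/2) * Real.cosh (u/2) := sinh_le_mul_cosh (by linarith)
  have h5 : 0 ≤ Real.sinh (u/2) := sinh_nonneg' (by linarith)
  nlinarith [Real.cosh_pos (u/2)]

private lemma cosh_sub_lower {ρ s : ℝ} (hρ : 0 ≤ ρ) (h : ρ ≤ s) :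
    (s - ρ) * Real.sinh ρ ≤ Real.cosh s - Real.cosh ρ := by
  have h1 : Real.cosh s = Real.cosh ρ * Real.cosh (s - ρ) + Real.sinh ρ * Real.sinh (s - ρ) := by
    rw [← Real.cosh_add]; ring_nf
  have h2 : s - ρ ≤ Real.sinh (s - ρ) := self_le_sinh' (by linarith)
  have h3 : 1 ≤ Real.cosh (s - ρ) := Real.one_le_cosh _
  have h4 : 0 ≤ Real.sinh ρ := sinh_nonneg' hρ
  nlinarith [Real.cosh_pos ρ]

private lemma cosh_sub_upper {ρ s : ℝ} (hρ : 0 ≤ ρ) (h : ρ ≤ s) :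
    Real.cosh s - Real.cosh ρ ≤ (s - ρ) * Real.sinh s := by
  have h1 : Real.cosh s = Real.cosh ρ * Real.cosh (s - ρ) + Real.sinh ρ * Real.sinh (s - ρ) := by
    rw [← Real.cosh_add]; ring_nf
  have h1' : Real.sinh s = Real.sinh ρ * Real.cosh (s - ρ) + Real.cosh ρ * Real.sinh (s - ρ) := by
    rw [← Real.sinh_add]; ring_nf
  have h2 : Real.cosh (s - ρ) - 1 ≤ (s - ρ) * Real.sinh (s - ρ) := cosh_sub_one_le (by linarith)
  have h3 : Real.sinh (s - ρ) ≤ (s - ρ) * Real.cosh (s - ρ) := sinh_le_mul_cosh (by linarith)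
  have h4 : 0 ≤ Real.sinh ρ := sinh_nonneg' hρ
  nlinarith [Real.cosh_pos ρ, sinh_nonneg' (by linarith : (0:ℝ) ≤ s - ρ), Real.one_le_cosh (s - ρ)]

private lemma phi_anti {ρ s : ℝ} (hρ : 1 ≤ ρ) (h : ρ ≤ s) :
    s * Real.sinh ρ ≤ ρ * Real.sinh s := by
  have h1' : Real.sinh s = Real.sinh ρ * Real.cosh (s - ρ) + Real.cosh ρ * Real.sinh (s - ρ) := by
    rw [← Real.sinh_add]; ring_nf
  have h2 : Real.cosh (s - ρ) + Real.sinh (s - ρ) = Real.exp (s - ρ) := Real.cosh_add_sinh _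
  have h3 : (s - ρ) + 1 ≤ Real.exp (s - ρ) := Real.add_one_le_exp _
  have h4 : Real.sinh ρ ≤ Real.cosh ρ := by
    nlinarith [Real.cosh_sub_sinh ρ, Real.exp_pos (-ρ)]
  have h5 : 0 < Real.sinh ρ := by
    have := Real.self_lt_sinh_iff.2 (show (0:ℝ) < ρ by linarith); linarith
  have h6 : 0 ≤ Real.sinh (s - ρ) := sinh_nonneg' (by linarith)
  have hA : ρ * (Real.sinh ρ * Real.sinh (s - ρ)) ≤ ρ * (Real.cosh ρ * Real.sinh (s - ρ)) := by
    apply mul_le_mul_of_nonneg_left _ (by linarith)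
    exact mul_le_mul_of_nonneg_right h4 h6
  have hB : ρ * Real.sinh ρ * ((s - ρ) + 1) ≤ ρ * Real.sinh ρ * Real.exp (s - ρ) := by
    apply mul_le_mul_of_nonneg_left h3 (by positivity)
  have hC : (s - ρ) * Real.sinh ρ ≤ ρ * ((s - ρ) * Real.sinh ρ) := by
    nlinarith [mul_nonneg (show (0:ℝ) ≤ s - ρ by linarith) h5.le]
  have hD : ρ * Real.sinh ρ * (Real.cosh (s - ρ) + Real.sinh (s - ρ))
      = ρ * Real.sinh ρ * Real.exp (s - ρ) := by rw [h2]
  have hE : ρ * Real.sinh s = ρ * (Real.sinh ρ * Real.cosh (s - ρ) + Real.cosh ρ * Real.sinh (s - ρ)) := by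
    rw [h1']
  nlinarith [Real.one_le_cosh (s - ρ)]

private lemma pow_le_factorial_mul_exp {x : ℝ} (hx : 0 ≤ x) (m : ℕ) :
    x ^ m ≤ m.factorial * Real.exp x := by
  have h := Real.sum_le_exp_of_nonneg hx (m + 1)
  have h1 : x ^ m / m.factorial ≤ Real.exp x := by
    refine le_trans ?_ h
    exact Finset.single_le_sum (f := fun i => x ^ i / i.factorial)
      (fun i _ => by positivity) (Finset.self_mem_range_succ m)
  have h2 : (0:ℝ) < m.factorial := by exact_mod_cast m.factorial_pos
  rw [div_le_iff₀ h2] at h1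
  linarith

private lemma one_le_sinh' {x : ℝ} (hx : 1 ≤ x) : 1 ≤ Real.sinh x := by
  have h1 : (1:ℝ) < Real.sinh 1 := Real.self_lt_sinh_iff.2 one_pos
  have := Real.sinh_le_sinh.2 hx
  linarith

private lemma sinh_succ_le {ρ : ℝ} (hρ : 1 ≤ ρ) : Real.sinh (ρ + 1) ≤ 6 * Real.sinh ρ := by
  have h1 : Real.sinh (ρ + 1) = Real.sinh ρ * Real.cosh 1 + Real.cosh ρ * Real.sinh 1 :=
    Real.sinh_add ρ 1
  have he : Real.exp 1 < 2.7182818286 := Real.exp_one_lt_d9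
  have he2 : Real.exp (-1 : ℝ) ≤ 1 := by
    rw [show (1:ℝ) = Real.exp 0 by simp]; exact Real.exp_le_exp.2 (by norm_num)
  have hc1 : Real.cosh 1 ≤ 2 := by rw [Real.cosh_eq]; linarith
  have hs1 : Real.sinh 1 ≤ 2 := by rw [Real.sinh_eq]; nlinarith [Real.exp_pos (-1:ℝ)]
  have hcs : Real.cosh ρ ≤ 2 * Real.sinh ρ := by
    have h2 : Real.cosh ρ - Real.sinh ρ = Real.exp (-ρ) := Real.cosh_sub_sinh ρ
    have h3 : Real.exp (-ρ) ≤ 1 := by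
      rw [show (1:ℝ) = Real.exp 0 by simp]; exact Real.exp_le_exp.2 (by linarith)
    have := one_le_sinh' hρ; linarith
  have hsp : 0 < Real.sinh ρ := by have := one_le_sinh' hρ; linarith
  have hcp : 0 < Real.cosh ρ := Real.cosh_pos ρ
  have hs1' : 0 < Real.sinh 1 := by have := one_le_sinh' le_rfl; linarith
  nlinarith

private lemma sqrt_sinh_succ_le {ρ : ℝ} (hρ : 1 ≤ ρ) :
    Real.sqrt (Real.sinh (ρ + 1)) ≤ 3 * Real.sqrt (Real.sinh ρ) := by
  have h1 : Real.sinh (ρ + 1) ≤ 9 * Real.sinh ρ := by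
    have := sinh_succ_le hρ
    have := one_le_sinh' hρ
    linarith
  calc Real.sqrt (Real.sinh (ρ + 1)) ≤ Real.sqrt (9 * Real.sinh ρ) := Real.sqrt_le_sqrt h1
    _ = 3 * Real.sqrt (Real.sinh ρ) := by
        rw [show (9:ℝ) * Real.sinh ρ = 3^2 * Real.sinh ρ by norm_num, Real.sqrt_mul (by positivity),
          Real.sqrt_sq (by norm_num)]

/-- lower bound for φ(s) : φ(s) ≥ φ(ρ) (1-e^{-2ρ}) e^{ρ-s} -/
private lemma phi_lower {t ρ s : ℝ} (ht : 0 < t) (hρ : 0 < ρ) (h : ρ ≤ s) :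
    ρ / (t * Real.sinh ρ) * ((1 - Real.exp (-(2*ρ))) * Real.exp (ρ - s))
      ≤ s / (t * Real.sinh s) := by
  have hsρ : 0 < Real.sinh ρ := by
    have := Real.self_lt_sinh_iff.2 hρ; linarith
  have hss : 0 < Real.sinh s := by
    have := Real.self_lt_sinh_iff.2 (lt_of_lt_of_le hρ h); linarith
  have he : Real.exp (-(2*ρ)) < 1 := by
    rw [show (1:ℝ) = Real.exp 0 by simp]; exact Real.exp_lt_exp.2 (by linarith)
  have key : (1 - Real.exp (-(2*ρ))) * Real.exp (ρ - s) * Real.sinh s ≤ Real.sinh ρ := by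
    have h1 : Real.sinh s ≤ Real.exp s / 2 := by
      rw [Real.sinh_eq]; nlinarith [Real.exp_pos (-s)]
    have e1 : Real.exp (ρ - s) * Real.exp s = Real.exp ρ := by rw [← Real.exp_add]; ring_nf
    have e2 : Real.exp (-(2*ρ)) * Real.exp ρ = Real.exp (-ρ) := by rw [← Real.exp_add]; ring_nf
    have h2 : (1 - Real.exp (-(2*ρ))) * Real.exp (ρ - s) * (Real.exp s / 2) = Real.sinh ρ := by
      rw [Real.sinh_eq]
      linear_combination ((1 - Real.exp (-(2*ρ)))/2) * e1 - (1/2) * e2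
    nlinarith [Real.exp_pos (ρ - s), Real.exp_pos (-(2*ρ))]
  rw [div_mul_eq_mul_div, div_le_div_iff₀ (by positivity) (by positivity)]
  have h3 : ρ * ((1 - Real.exp (-(2*ρ))) * Real.exp (ρ - s)) * Real.sinh s ≤ ρ * Real.sinh ρ := by
    nlinarith [Real.exp_pos (ρ - s)]
  have h4 : ρ * Real.sinh ρ ≤ s * Real.sinh ρ := by nlinarith
  nlinarith

noncomputable def gm (m : ℕ) (t ρ s : ℝ) : ℝ :=
  Real.sinh s / Real.sqrt (Real.cosh s - Real.cosh ρ) * (s / (t * Real.sinh s)) ^ m *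
    Real.exp (-s ^ 2 / (2 * t))

section gmfacts

variable {m : ℕ} {t ρ s : ℝ}

private lemma delta_pos (hρ : 0 < ρ) (hs : ρ < s) : 0 < Real.cosh s - Real.cosh ρ := by
  have h1 := cosh_sub_lower hρ.le hs.le
  have h2 : 0 < Real.sinh ρ := by have := Real.self_lt_sinh_iff.2 hρ; linarith
  nlinarith

private lemma gm_pos (ht : 0 < t) (hρ : 0 < ρ) (hs : ρ < s) : 0 < gm m t ρ s := by
  have h1 := delta_pos hρ hs
  have h2 : 0 < Real.sinh s := by
    have := Real.self_lt_sinh_iff.2 (hρ.trans hs); linarith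
  have h3 : 0 < s := hρ.trans hs
  unfold gm
  positivity

private lemma gm_nonneg (ht : 0 < t) (hρ : 0 < ρ) (hs : ρ < s) : 0 ≤ gm m t ρ s :=
  (gm_pos ht hρ hs).le

/-- main upper bound for `gm (m'+1)`. -/
private lemma gm_le {m' : ℕ} (ht : 0 < t) (hρ : 1 ≤ ρ) (hs : ρ < s) :
    gm (m'+1) t ρ s ≤ s ^ (m'+1) * Real.exp (-s ^ 2 / (2 * t)) /
      (Real.sqrt (s - ρ) * Real.sqrt (Real.sinh ρ) * t ^ (m'+1) * Real.sinh ρ ^ m') := by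
  have hρ0 : (0:ℝ) < ρ := by linarith
  have hΔ : 0 < Real.cosh s - Real.cosh ρ := delta_pos hρ0 hs
  have hsρ : 0 < Real.sinh ρ := by have := Real.self_lt_sinh_iff.2 hρ0; linarith
  have hss : 0 < Real.sinh s := by have := Real.self_lt_sinh_iff.2 (hρ0.trans hs); linarith
  have hssρ : Real.sinh ρ ≤ Real.sinh s := Real.sinh_le_sinh.2 hs.le
  have hsp : 0 < s - ρ := by linarith
  have e1 : gm (m'+1) t ρ s = Real.sinh s * (s ^ (m'+1) * Real.exp (-s ^ 2 / (2 * t))) /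
      (Real.sqrt (Real.cosh s - Real.cosh ρ) * t ^ (m'+1) * Real.sinh s ^ m' * Real.sinh s) := by
    unfold gm
    rw [div_pow, mul_pow]
    ring
  have hden : Real.sqrt (s - ρ) * Real.sqrt (Real.sinh ρ) * t ^ (m'+1) * Real.sinh ρ ^ m'
      * Real.sinh s ≤
      Real.sqrt (Real.cosh s - Real.cosh ρ) * t ^ (m'+1) * Real.sinh s ^ m' * Real.sinh s := by
    have hsq : Real.sqrt (s - ρ) * Real.sqrt (Real.sinh ρ)
        ≤ Real.sqrt (Real.cosh s - Real.cosh ρ) := by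
      rw [← Real.sqrt_mul hsp.le]
      exact Real.sqrt_le_sqrt (cosh_sub_lower hρ0.le hs.le)
    gcongr
  have hs0 : (0:ℝ) < s := by linarith
  have e2 : gm (m'+1) t ρ s ≤ Real.sinh s * (s ^ (m'+1) * Real.exp (-s ^ 2 / (2 * t))) /
      (Real.sqrt (s - ρ) * Real.sqrt (Real.sinh ρ) * t ^ (m'+1) * Real.sinh ρ ^ m'
        * Real.sinh s) := by
    rw [e1]
    exact div_le_div_of_nonneg_left (by positivity) (by positivity) hden
  refine e2.trans (le_of_eq ?_)
  rw [show Real.sinh s * (s ^ (m'+1) * Real.exp (-s ^ 2 / (2 * t)))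
      = (s ^ (m'+1) * Real.exp (-s ^ 2 / (2 * t))) * Real.sinh s by ring,
    show Real.sqrt (s - ρ) * Real.sqrt (Real.sinh ρ) * t ^ (m'+1) * Real.sinh ρ ^ m'
      * Real.sinh s
      = (Real.sqrt (s - ρ) * Real.sqrt (Real.sinh ρ) * t ^ (m'+1) * Real.sinh ρ ^ m')
        * Real.sinh s by ring,
    mul_div_mul_right _ _ hss.ne']

end gmfacts
section gmfacts2

variable {m : ℕ} {t ρ s : ℝ}

/-- lower bound for `gm` on `Ioo ρ (ρ + 1/ρ)`. -/
private lemma gm_ge (ht : 0 < t) (hρ : 1 ≤ ρ) (hs : ρ < s) (hs' : s < ρ + 1/ρ) :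
    Real.sinh ρ / (Real.sqrt (s - ρ) * Real.sqrt (Real.sinh (ρ+1))) *
      ((ρ+1) / (t * Real.sinh (ρ+1))) ^ m * Real.exp (-(ρ^2+3) / (2 * t))
      ≤ gm m t ρ s := by
  have hρ0 : (0:ℝ) < ρ := by linarith
  have hρinv : 1/ρ ≤ 1 := by
    rw [div_le_one hρ0]; linarith
  have hsub : s ≤ ρ + 1 := by linarith
  have hsρ : 0 < Real.sinh ρ := by have := Real.self_lt_sinh_iff.2 hρ0; linarith
  have hss : 0 < Real.sinh s := by have := Real.self_lt_sinh_iff.2 (hρ0.trans hs); linarith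
  have hss1 : 0 < Real.sinh (ρ+1) := by
    have := Real.self_lt_sinh_iff.2 (show (0:ℝ) < ρ+1 by linarith); linarith
  have hΔ : 0 < Real.cosh s - Real.cosh ρ := delta_pos hρ0 hs
  have hsp : 0 < s - ρ := by linarith
  -- sqrt bound
  have hsq : Real.sqrt (Real.cosh s - Real.cosh ρ)
      ≤ Real.sqrt (s - ρ) * Real.sqrt (Real.sinh (ρ+1)) := by
    rw [← Real.sqrt_mul hsp.le]
    apply Real.sqrt_le_sqrt
    calc Real.cosh s - Real.cosh ρ ≤ (s - ρ) * Real.sinh s := cosh_sub_upper hρ0.le hs.le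
      _ ≤ (s - ρ) * Real.sinh (ρ+1) := by
          have := Real.sinh_le_sinh.2 hsub
          nlinarith
  -- phi bound
  have hphi : (ρ+1) / (t * Real.sinh (ρ+1)) ≤ s / (t * Real.sinh s) := by
    rw [div_le_div_iff₀ (by positivity) (by positivity)]
    have h := phi_anti (show 1 ≤ s by linarith) hsub
    nlinarith
  have hphi0 : 0 ≤ (ρ+1) / (t * Real.sinh (ρ+1)) := by positivity
  -- exp bound
  have hexp : Real.exp (-(ρ^2+3) / (2 * t)) ≤ Real.exp (-s^2 / (2 * t)) := by
    apply Real.exp_le_exp.2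
    apply div_le_div_of_nonneg_right _ (by positivity)
    have h1 : s^2 ≤ (ρ + 1/ρ)^2 := by nlinarith
    have h2 : (ρ + 1/ρ)^2 = ρ^2 + 2 + (1/ρ)^2 := by field_simp; ring
    have h3 : (1/ρ)^2 ≤ 1 := by nlinarith
    nlinarith
  have hfrac : Real.sinh ρ / (Real.sqrt (s - ρ) * Real.sqrt (Real.sinh (ρ+1)))
      ≤ Real.sinh s / Real.sqrt (Real.cosh s - Real.cosh ρ) := by
    apply div_le_div₀ (by positivity) (Real.sinh_le_sinh.2 hs.le) (by positivity) hsq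
  unfold gm
  have h0 : (0:ℝ) ≤ Real.sinh ρ / (Real.sqrt (s - ρ) * Real.sqrt (Real.sinh (ρ+1))) := by
    positivity
  have hs0 : (0:ℝ) < s := by linarith
  gcongr
end gmfacts2
section integr

variable {m : ℕ} {t ρ : ℝ}

private lemma gm_continuousOn (ht : 0 < t) (hρ : 0 < ρ) :
    ContinuousOn (gm m t ρ) (Set.Ioi ρ) := by
  have h1 : ContinuousOn (fun s => Real.sinh s / Real.sqrt (Real.cosh s - Real.cosh ρ))
      (Set.Ioi ρ) := by
    apply ContinuousOn.div Real.continuous_sinh.continuousOn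
      ((Real.continuous_sqrt.comp (Real.continuous_cosh.sub continuous_const)).continuousOn)
    intro s hs
    exact ne_of_gt (Real.sqrt_pos.2 (delta_pos hρ hs))
  have h2 : ContinuousOn (fun s : ℝ => (s / (t * Real.sinh s)) ^ m) (Set.Ioi ρ) := by
    apply ContinuousOn.pow
    apply ContinuousOn.div continuous_id.continuousOn
      (continuous_const.mul Real.continuous_sinh).continuousOn
    intro s hs
    have hx : (0:ℝ) < s := hρ.trans hs
    have : 0 < Real.sinh s := by
      have := Real.self_lt_sinh_iff.2 hx; linarith
    exact mul_ne_zero ht.ne' this.ne'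
  have h3 : ContinuousOn (fun s : ℝ => Real.exp (-s ^ 2 / (2 * t))) (Set.Ioi ρ) := by
    apply Continuous.continuousOn; continuity
  exact (h1.mul h2).mul h3

private lemma pow_gm_aesm (ht : 0 < t) (hρ : 0 < ρ) (k : ℕ) :
    MeasureTheory.AEStronglyMeasurable (fun s => s ^ k * gm m t ρ s)
      (MeasureTheory.volume.restrict (Set.Ioi ρ)) :=
  (((continuous_pow k).continuousOn).mul (gm_continuousOn ht hρ)).aestronglyMeasurable
    measurableSet_Ioi

private lemma rpow_half_integrableOn (ρ c : ℝ) (hc : 0 ≤ c) :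
    MeasureTheory.IntegrableOn (fun s : ℝ => (s - ρ) ^ (-(1/2) : ℝ)) (Set.Ioc ρ (ρ + c)) := by
  have h1 : IntervalIntegrable (fun x : ℝ => x ^ (-(1/2) : ℝ)) MeasureTheory.volume 0 c :=
    intervalIntegral.intervalIntegrable_rpow' (by norm_num)
  have h2 := h1.comp_sub_right ρ
  rw [zero_add, show c + ρ = ρ + c by ring] at h2
  exact (intervalIntegrable_iff_integrableOn_Ioc_of_le (by linarith)).1 h2

private lemma integrableOn_pow_gm (ht : 0 < t) (hm : 1 ≤ m) (hρ : 1 ≤ ρ) (k : ℕ) :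
    MeasureTheory.IntegrableOn (fun s => s ^ k * gm m t ρ s) (Set.Ioi ρ) := by
  obtain ⟨m', rfl⟩ : ∃ m', m = m' + 1 := ⟨m - 1, (Nat.succ_pred_eq_of_pos hm).symm⟩
  set M := m' + 1 with hM
  have hρ0 : (0:ℝ) < ρ := by linarith
  have hsρ : 0 < Real.sinh ρ := by have := Real.self_lt_sinh_iff.2 hρ0; linarith
  have h1sρ : 1 ≤ Real.sinh ρ := one_le_sinh' hρ
  have h1p : (1:ℝ) ≤ Real.sinh ρ ^ m' := by
    have h := pow_le_pow_left₀ (by norm_num : (0:ℝ) ≤ 1) h1sρ m'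
    simpa using h
  rw [show Set.Ioi ρ = Set.Ioc ρ (ρ+1) ∪ Set.Ioi (ρ+1) from
    (Set.Ioc_union_Ioi_eq_Ioi (by linarith)).symm]
  apply MeasureTheory.IntegrableOn.union
  · -- near the endpoint
    set C := (ρ+1)^k * ((ρ+1)^M / (t^M * Real.sqrt (Real.sinh ρ))) with hC
    apply MeasureTheory.Integrable.mono' ((rpow_half_integrableOn ρ 1 one_pos.le).const_mul C)
    · exact (pow_gm_aesm ht hρ0 k).mono_measure
        (MeasureTheory.Measure.restrict_mono Set.Ioc_subset_Ioi_self le_rfl)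
    · filter_upwards [MeasureTheory.ae_restrict_mem measurableSet_Ioc] with s hs
      have hs1 : ρ < s := hs.1
      have hs2 : s ≤ ρ + 1 := hs.2
      have hs0 : (0:ℝ) < s := by linarith
      have hsp : (0:ℝ) < s - ρ := by linarith
      have hgm := gm_le (m' := m') ht hρ hs1
      have hgm0 : 0 ≤ gm M t ρ s := gm_nonneg ht hρ0 hs1
      rw [Real.norm_eq_abs, abs_of_nonneg (by positivity)]
      have hrw : (s - ρ) ^ (-(1/2) : ℝ) = 1 / Real.sqrt (s - ρ) := by
        rw [Real.rpow_neg hsp.le, Real.sqrt_eq_rpow]; norm_num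
      rw [hrw, hC]
      have hexp1 : Real.exp (-s ^ 2 / (2 * t)) ≤ 1 := by
        have h9 : -s^2/(2*t) ≤ 0 := by
          apply div_nonpos_of_nonpos_of_nonneg
          · nlinarith [sq_nonneg s]
          · linarith
        have h10 := Real.exp_le_exp.2 h9
        rwa [Real.exp_zero] at h10
      calc s ^ k * gm M t ρ s
          ≤ s ^ k * (s ^ M * Real.exp (-s ^ 2 / (2 * t)) /
            (Real.sqrt (s - ρ) * Real.sqrt (Real.sinh ρ) * t ^ M * Real.sinh ρ ^ m')) := by
            gcongr
        _ ≤ (ρ+1) ^ k * ((ρ+1) ^ M * 1 /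
            (Real.sqrt (s - ρ) * Real.sqrt (Real.sinh ρ) * t ^ M * 1)) := by
            gcongr <;> first | exact hexp1 | exact h1p | linarith | positivity
        _ = (ρ+1)^k * ((ρ+1)^M / (t^M * Real.sqrt (Real.sinh ρ))) * (1 / Real.sqrt (s - ρ)) := by
            ring
  · -- the tail
    set C' := 1 / (t^M * Real.sqrt (Real.sinh ρ)) with hC'
    have hJ : MeasureTheory.IntegrableOn
        (fun s : ℝ => s ^ (((k + M : ℕ)) : ℝ) * Real.exp (-(1/(2*t)) * s ^ 2)) (Set.Ioi 0) :=
      integrableOn_rpow_mul_exp_neg_mul_sq (by positivity)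
        (lt_of_lt_of_le neg_one_lt_zero (Nat.cast_nonneg _))
    have hJ2 : MeasureTheory.IntegrableOn
        (fun s : ℝ => s ^ (k + M) * Real.exp (-(1/(2*t)) * s ^ 2)) (Set.Ioi (ρ+1)) := by
      apply MeasureTheory.IntegrableOn.congr_fun (hJ.mono_set ?_) ?_ measurableSet_Ioi
      · intro x hx; exact lt_trans (by linarith : (0:ℝ) < ρ + 1) hx
      · intro x hx
        norm_cast
    apply MeasureTheory.Integrable.mono' (hJ2.const_mul C')
    · exact (pow_gm_aesm ht hρ0 k).mono_measure
        (MeasureTheory.Measure.restrict_mono (Set.Ioi_subset_Ioi (by linarith)) le_rfl)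
    · filter_upwards [MeasureTheory.ae_restrict_mem measurableSet_Ioi] with s hs
      have hs1 : ρ < s := by have : ρ + 1 < s := hs; linarith
      have hs0 : (0:ℝ) < s := by linarith
      have hgm := gm_le (m' := m') ht hρ hs1
      have hgm0 : 0 ≤ gm M t ρ s := gm_nonneg ht hρ0 hs1
      rw [Real.norm_eq_abs, abs_of_nonneg (by positivity)]
      have hsq1 : (1:ℝ) ≤ Real.sqrt (s - ρ) := by
        rw [show (1:ℝ) = Real.sqrt 1 from Real.sqrt_one.symm]
        apply Real.sqrt_le_sqrt
        have : ρ + 1 < s := hs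
        linarith
      have hexp : Real.exp (-s ^ 2 / (2*t)) = Real.exp (-(1/(2*t)) * s ^ 2) := by
        congr 1; field_simp
      calc s ^ k * gm M t ρ s
          ≤ s ^ k * (s ^ M * Real.exp (-s ^ 2 / (2 * t)) /
            (Real.sqrt (s - ρ) * Real.sqrt (Real.sinh ρ) * t ^ M * Real.sinh ρ ^ m')) := by
            gcongr
        _ ≤ s ^ k * (s ^ M * Real.exp (-s ^ 2 / (2 * t)) /
            (1 * Real.sqrt (Real.sinh ρ) * t ^ M * 1)) := by
            gcongr <;> first | exact hsq1 | exact h1p | positivity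
        _ = C' * (s ^ (k + M) * Real.exp (-(1/(2*t)) * s ^ 2)) := by
            rw [hC', ← hexp, pow_add]; ring

private lemma integrableOn_gm (ht : 0 < t) (hm : 1 ≤ m) (hρ : 1 ≤ ρ) :
    MeasureTheory.IntegrableOn (gm m t ρ) (Set.Ioi ρ) := by
  have h := integrableOn_pow_gm (m := m) ht hm hρ 0
  simpa using h

private lemma integrableOn_gm_mul_sub (ht : 0 < t) (hm : 1 ≤ m) (hρ : 1 ≤ ρ) :
    MeasureTheory.IntegrableOn (fun s => gm m t ρ s * (s - ρ)) (Set.Ioi ρ) := by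
  have hρ0 : (0:ℝ) < ρ := by linarith
  apply MeasureTheory.Integrable.mono' (integrableOn_pow_gm ht hm hρ 1)
  · exact ((gm_continuousOn ht hρ0).mul
      ((continuous_id.sub continuous_const).continuousOn)).aestronglyMeasurable measurableSet_Ioi
  · filter_upwards [MeasureTheory.ae_restrict_mem measurableSet_Ioi] with s hs
    have hs1 : ρ < s := hs
    have hgm0 : 0 ≤ gm m t ρ s := gm_nonneg ht hρ0 hs1
    rw [Real.norm_eq_abs, abs_of_nonneg (by nlinarith)]
    have : s - ρ ≤ s := by linarith
    nlinarith

end integr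
section integrals

private lemma integrableOn_exp_shift {ρ c : ℝ} (hc : 0 < c) :
    MeasureTheory.IntegrableOn (fun s : ℝ => Real.exp (-(c * (s - ρ)))) (Set.Ioi ρ) := by
  apply MeasureTheory.IntegrableOn.congr_fun
    ((exp_neg_integrableOn_Ioi ρ hc).const_mul (Real.exp (c * ρ)))
    (fun x hx => ?_) measurableSet_Ioi
  rw [← Real.exp_add]; ring_nf

private lemma integral_exp_shift {ρ c : ℝ} (hc : 0 < c) :
    ∫ s in Set.Ioi ρ, Real.exp (-(c * (s - ρ))) = 1 / c := by
  have hderiv : ∀ x ∈ Set.Ioi ρ,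
      HasDerivAt (fun s : ℝ => -(1/c) * Real.exp (-(c * (s - ρ))))
        (Real.exp (-(c * (x - ρ)))) x := by
    intro x _
    have hu : HasDerivAt (fun s : ℝ => -(c * (s - ρ))) (-c) x := by
      have h1 : HasDerivAt (fun s : ℝ => s - ρ) 1 x := (hasDerivAt_id x).sub_const ρ
      have h2 := (h1.const_mul c).neg
      rw [mul_one] at h2
      exact h2
    have h3 := (hu.exp).const_mul (-(1/c))
    refine h3.congr_deriv ?_
    rw [show -(1/c) * (Real.exp (-(c * (x - ρ))) * -c) = Real.exp (-(c * (x - ρ))) * (c * (1/c)) by ring,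
      mul_one_div_cancel hc.ne', mul_one]
  have hcont : ContinuousWithinAt (fun s : ℝ => -(1/c) * Real.exp (-(c * (s - ρ))))
      (Set.Ici ρ) ρ := by
    apply Continuous.continuousWithinAt; continuity
  have htend : Filter.Tendsto (fun s : ℝ => -(1/c) * Real.exp (-(c * (s - ρ))))
      Filter.atTop (nhds 0) := by
    have h1 : Filter.Tendsto (fun s : ℝ => s - ρ) Filter.atTop Filter.atTop :=
      Filter.tendsto_atTop_add_const_right _ (-ρ) Filter.tendsto_id
    have h2 : Filter.Tendsto (fun s : ℝ => c * (s - ρ)) Filter.atTop Filter.atTop := by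
      apply Filter.Tendsto.const_mul_atTop hc h1
    have h3 : Filter.Tendsto (fun s : ℝ => -(c * (s - ρ))) Filter.atTop Filter.atBot :=
      Filter.tendsto_neg_atTop_atBot.comp h2
    have h4 : Filter.Tendsto (fun s : ℝ => Real.exp (-(c * (s - ρ)))) Filter.atTop (nhds 0) :=
      Real.tendsto_exp_atBot.comp h3
    have h5 := h4.const_mul (-(1/c))
    simpa using h5
  have := MeasureTheory.integral_Ioi_of_hasDerivAt_of_tendsto hcont hderiv
    (integrableOn_exp_shift hc) htend
  rw [this]
  simp

private lemma integral_rpow_half {ρ c : ℝ} (hc : 0 ≤ c) :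
    ∫ s in Set.Ioo ρ (ρ + c), (s - ρ) ^ (-(1/2) : ℝ) = 2 * Real.sqrt c := by
  rw [← MeasureTheory.integral_Ioc_eq_integral_Ioo,
    ← intervalIntegral.integral_of_le (by linarith : ρ ≤ ρ + c)]
  have h1 := intervalIntegral.integral_comp_sub_right (a := ρ) (b := ρ + c)
    (fun x => x ^ (-(1/2) : ℝ)) ρ
  rw [sub_self, add_sub_cancel_left] at h1
  rw [h1, integral_rpow (Or.inl (by norm_num))]
  rw [Real.zero_rpow (by norm_num)]
  rw [show -(1/2) + 1 = (1/2 : ℝ) by norm_num, ← Real.sqrt_eq_rpow]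
  ring

end integrals
section bounds

variable {m' : ℕ} {t ρ s : ℝ}

set_option maxHeartbeats 1000000 in
/-- pointwise bound for the integrand of `N`. -/
private lemma gm_mul_sub_le (ht : 0 < t) (hρ1 : 1 ≤ ρ) (hρt : 2*t ≤ ρ) (hs : ρ < s) :
    gm (m'+1) t ρ s * (s - ρ) ≤
      (ρ^(m'+1) * ((m'+1).factorial : ℝ) * Real.exp 1 * (2*t+1) * Real.exp (-ρ^2/(2*t)) /
        (2 * Real.sqrt ρ * Real.sqrt (Real.sinh ρ) * t^(m'+1) * Real.sinh ρ ^ m')) *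
      Real.exp (-(ρ/(4*t) * (s - ρ))) := by
  set M := m' + 1 with hM
  set u := s - ρ with hu'
  set c := ρ/(2*t) with hc'
  have hρ0 : (0:ℝ) < ρ := by linarith
  have hu : 0 < u := by simp only [hu']; linarith
  have hc1 : 1 ≤ c := by rw [hc', le_div_iff₀ (by linarith)]; linarith
  have hc0 : 0 < c := by linarith
  have hS : 0 < Real.sinh ρ := by have := Real.self_lt_sinh_iff.2 hρ0; linarith
  have hs0 : (0:ℝ) < s := by linarith
  have haρ : 0 < Real.sqrt ρ := Real.sqrt_pos.2 hρ0
  have haS : 0 < Real.sqrt (Real.sinh ρ) := Real.sqrt_pos.2 hS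
  have hau : 0 < Real.sqrt u := Real.sqrt_pos.2 hu
  have hSm : (0:ℝ) < Real.sinh ρ ^ m' := by positivity
  -- step 1 : use gm_le and cancel the √u
  have h1 : gm M t ρ s * u ≤
      s ^ M * Real.exp (-s^2/(2*t)) * Real.sqrt u /
        (Real.sqrt (Real.sinh ρ) * t^M * Real.sinh ρ ^ m') := by
    have h0 := gm_le (m' := m') ht hρ1 hs
    have e2 : s ^ M * Real.exp (-s^2/(2*t)) / (Real.sqrt u * Real.sqrt (Real.sinh ρ) * t^M *
        Real.sinh ρ ^ m') * u
        = s ^ M * Real.exp (-s^2/(2*t)) * (u / Real.sqrt u) /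
          (Real.sqrt (Real.sinh ρ) * t^M * Real.sinh ρ ^ m') := by
      field_simp
    calc gm M t ρ s * u ≤ s ^ M * Real.exp (-s^2/(2*t)) /
          (Real.sqrt u * Real.sqrt (Real.sinh ρ) * t^M * Real.sinh ρ ^ m') * u := by
          exact mul_le_mul_of_nonneg_right h0 hu.le
      _ = s ^ M * Real.exp (-s^2/(2*t)) * (u / Real.sqrt u) /
          (Real.sqrt (Real.sinh ρ) * t^M * Real.sinh ρ ^ m') := e2
      _ = _ := by rw [Real.div_sqrt]
  -- numerator bounds
  have n1 : s ^ M ≤ ρ ^ M * (((M).factorial : ℝ) * Real.exp (1 + u)) := by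
    have e1 : s ≤ ρ * (1 + u) := by nlinarith
    calc s ^ M ≤ (ρ * (1+u)) ^ M := by
          apply pow_le_pow_left₀ (by linarith) e1
      _ = ρ ^ M * (1+u) ^ M := mul_pow _ _ _
      _ ≤ ρ ^ M * (((M).factorial : ℝ) * Real.exp (1 + u)) := by
          have := pow_le_factorial_mul_exp (x := 1 + u) (by linarith) M
          gcongr
  have n2 : Real.exp (-s^2/(2*t)) ≤ Real.exp (-ρ^2/(2*t)) * Real.exp (-(2*c*u)) := by
    rw [← Real.exp_add]
    apply Real.exp_le_exp.2
    have e1 : -ρ^2/(2*t) + -(2*c*u) = (-(ρ^2) - 2*ρ*u)/(2*t) := by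
      rw [hc']; field_simp; ring
    rw [e1]
    have e3 : s^2 = ρ^2 + 2*ρ*u + u^2 := by rw [hu']; ring
    apply div_le_div_of_nonneg_right _ (by linarith)
    · nlinarith [sq_nonneg u]
  have n3 : Real.sqrt u ≤ (Real.sqrt ρ * u + 1/Real.sqrt ρ)/2 := by
    have k1 : Real.sqrt u * Real.sqrt u = u := Real.mul_self_sqrt hu.le
    have k2 : Real.sqrt ρ * Real.sqrt ρ = ρ := Real.mul_self_sqrt hρ0.le
    rw [le_div_iff₀ (by norm_num : (0:ℝ) < 2), ← sub_nonneg]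
    have key : Real.sqrt ρ * (Real.sqrt ρ * u + 1/Real.sqrt ρ - Real.sqrt u * 2)
        = ρ * u + 1 - 2 * (Real.sqrt ρ * Real.sqrt u) := by
      field_simp
      nlinarith [k2]
    nlinarith [sq_nonneg (Real.sqrt ρ * Real.sqrt u - 1), key, haρ]
  -- exp decay bounds
  have f2 : Real.exp 1 * Real.exp u * Real.exp (-(2*c*u)) ≤ Real.exp 1 * Real.exp (-(c*u)) := by
    rw [← Real.exp_add, ← Real.exp_add, ← Real.exp_add]
    apply Real.exp_le_exp.2
    nlinarith
  have f3 : u * Real.exp (-(c*u)) ≤ (1/c) * Real.exp (-(c/2*u)) := by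
    have q : c*u ≤ Real.exp (c*u/2) := by
      have hq := Real.quadratic_le_exp_of_nonneg (x := c*u/2) (by positivity)
      nlinarith [sq_nonneg (c*u/2 - 1)]
    have h := mul_le_mul_of_nonneg_right q (Real.exp_pos (-(c*u))).le
    rw [← Real.exp_add] at h
    have e3 : c*u/2 + -(c*u) = -(c/2*u) := by ring
    rw [e3] at h
    calc u * Real.exp (-(c*u)) = (1/c) * (c*u*Real.exp (-(c*u))) := by
          field_simp
      _ ≤ (1/c) * Real.exp (-(c/2*u)) := by
          apply mul_le_mul_of_nonneg_left h (by positivity)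
  have f4 : Real.exp (-(c*u)) ≤ Real.exp (-(c/2*u)) := by
    apply Real.exp_le_exp.2; nlinarith
  -- combine the scalar factors
  have comb : Real.exp (1 + u) * Real.exp (-(2*c*u)) * ((Real.sqrt ρ * u + 1/Real.sqrt ρ)/2)
      ≤ Real.exp 1 * ((2*t+1)/(2*Real.sqrt ρ)) * Real.exp (-(c/2*u)) := by
    have e5 : Real.exp (1+u) = Real.exp 1 * Real.exp u := Real.exp_add 1 u
    have k2 : Real.sqrt ρ * Real.sqrt ρ = ρ := Real.mul_self_sqrt hρ0.le
    have hcinv : Real.sqrt ρ * (1/c) = 2*t/Real.sqrt ρ := by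
      rw [hc']
      field_simp
      linear_combination k2
    have step : Real.exp u * Real.exp (-(2*c*u)) * (Real.sqrt ρ * u + 1/Real.sqrt ρ)
        ≤ ((2*t+1)/Real.sqrt ρ) * Real.exp (-(c/2*u)) := by
      have g1 : Real.exp u * Real.exp (-(2*c*u)) ≤ Real.exp (-(c*u)) := by
        rw [← Real.exp_add]; apply Real.exp_le_exp.2; nlinarith
      have g0 : 0 < Real.sqrt ρ * u + 1/Real.sqrt ρ := by positivity
      calc Real.exp u * Real.exp (-(2*c*u)) * (Real.sqrt ρ * u + 1/Real.sqrt ρ)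
          ≤ Real.exp (-(c*u)) * (Real.sqrt ρ * u + 1/Real.sqrt ρ) :=
            mul_le_mul_of_nonneg_right g1 g0.le
        _ = Real.sqrt ρ * (u * Real.exp (-(c*u))) + (1/Real.sqrt ρ) * Real.exp (-(c*u)) := by
            ring
        _ ≤ Real.sqrt ρ * ((1/c) * Real.exp (-(c/2*u))) + (1/Real.sqrt ρ) *
              Real.exp (-(c/2*u)) := by
            gcongr
        _ = (Real.sqrt ρ * (1/c) + 1/Real.sqrt ρ) * Real.exp (-(c/2*u)) := by ring
        _ = ((2*t+1)/Real.sqrt ρ) * Real.exp (-(c/2*u)) := by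
            rw [hcinv]; congr 1; field_simp; try ring
    calc Real.exp (1 + u) * Real.exp (-(2*c*u)) * ((Real.sqrt ρ * u + 1/Real.sqrt ρ)/2)
        = Real.exp 1 * (Real.exp u * Real.exp (-(2*c*u)) * (Real.sqrt ρ * u + 1/Real.sqrt ρ)) / 2
          := by rw [e5]; ring
      _ ≤ Real.exp 1 * (((2*t+1)/Real.sqrt ρ) * Real.exp (-(c/2*u))) / 2 := by
          gcongr
      _ = Real.exp 1 * ((2*t+1)/(2*Real.sqrt ρ)) * Real.exp (-(c/2*u)) := by ring
  -- final assembly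
  have hden : 0 < Real.sqrt (Real.sinh ρ) * t^M * Real.sinh ρ ^ m' := by positivity
  have final : s ^ M * Real.exp (-s^2/(2*t)) * Real.sqrt u ≤
      (ρ ^ M * ((M).factorial : ℝ)) * (Real.exp 1 * ((2*t+1)/(2*Real.sqrt ρ))) *
        Real.exp (-ρ^2/(2*t)) * Real.exp (-(c/2*u)) := by
    calc s ^ M * Real.exp (-s^2/(2*t)) * Real.sqrt u
        ≤ (ρ ^ M * (((M).factorial : ℝ) * Real.exp (1 + u))) *
            (Real.exp (-ρ^2/(2*t)) * Real.exp (-(2*c*u))) *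
            ((Real.sqrt ρ * u + 1/Real.sqrt ρ)/2) := by
          apply mul_le_mul (mul_le_mul n1 n2 (Real.exp_pos _).le (by positivity)) n3
            hau.le (by positivity)
      _ = (ρ ^ M * ((M).factorial : ℝ)) * Real.exp (-ρ^2/(2*t)) *
            (Real.exp (1 + u) * Real.exp (-(2*c*u)) * ((Real.sqrt ρ * u + 1/Real.sqrt ρ)/2))
          := by ring
      _ ≤ (ρ ^ M * ((M).factorial : ℝ)) * Real.exp (-ρ^2/(2*t)) *
            (Real.exp 1 * ((2*t+1)/(2*Real.sqrt ρ)) * Real.exp (-(c/2*u))) := by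
          gcongr
      _ = _ := by ring
  have e6 : -(c/2*u) = -(ρ/(4*t) * u) := by rw [hc']; ring
  rw [e6] at final
  calc gm M t ρ s * u ≤ s ^ M * Real.exp (-s^2/(2*t)) * Real.sqrt u /
        (Real.sqrt (Real.sinh ρ) * t^M * Real.sinh ρ ^ m') := h1
    _ ≤ (ρ ^ M * ((M).factorial : ℝ)) * (Real.exp 1 * ((2*t+1)/(2*Real.sqrt ρ))) *
          Real.exp (-ρ^2/(2*t)) * Real.exp (-(ρ/(4*t) * u)) /
        (Real.sqrt (Real.sinh ρ) * t^M * Real.sinh ρ ^ m') := by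
        apply div_le_div_of_nonneg_right final hden.le
    _ = (ρ^M * ((M).factorial : ℝ) * Real.exp 1 * (2*t+1) * Real.exp (-ρ^2/(2*t)) /
          (2 * Real.sqrt ρ * Real.sqrt (Real.sinh ρ) * t^M * Real.sinh ρ ^ m')) *
        Real.exp (-(ρ/(4*t) * u)) := by
        field_simp

end bounds
section intbounds

variable {m' : ℕ} {t ρ : ℝ}

/-- upper bound for `N`. -/
private lemma N_le (ht : 0 < t) (hρ1 : 1 ≤ ρ) (hρt : 2*t ≤ ρ) :
    ∫ s in Set.Ioi ρ, gm (m'+1) t ρ s * (s - ρ) ≤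
      (ρ^(m'+1) * ((m'+1).factorial : ℝ) * Real.exp 1 * (2*t+1) * Real.exp (-ρ^2/(2*t)) /
        (2 * Real.sqrt ρ * Real.sqrt (Real.sinh ρ) * t^(m'+1) * Real.sinh ρ ^ m')) *
      (4*t/ρ) := by
  have hρ0 : (0:ℝ) < ρ := by linarith
  set D := ρ^(m'+1) * ((m'+1).factorial : ℝ) * Real.exp 1 * (2*t+1) * Real.exp (-ρ^2/(2*t)) /
      (2 * Real.sqrt ρ * Real.sqrt (Real.sinh ρ) * t^(m'+1) * Real.sinh ρ ^ m') with hD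
  have hc : 0 < ρ/(4*t) := by positivity
  have hint : MeasureTheory.IntegrableOn
      (fun s : ℝ => D * Real.exp (-(ρ/(4*t) * (s - ρ)))) (Set.Ioi ρ) :=
    (integrableOn_exp_shift hc).const_mul D
  have h1 : ∫ s in Set.Ioi ρ, gm (m'+1) t ρ s * (s - ρ)
      ≤ ∫ s in Set.Ioi ρ, D * Real.exp (-(ρ/(4*t) * (s - ρ))) := by
    apply MeasureTheory.setIntegral_mono_on
      (integrableOn_gm_mul_sub ht (Nat.le_add_left 1 m') hρ1) hint measurableSet_Ioi
    intro s hs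
    exact gm_mul_sub_le ht hρ1 hρt hs
  have h2 : ∫ s in Set.Ioi ρ, D * Real.exp (-(ρ/(4*t) * (s - ρ)))
      = D * (4*t/ρ) := by
    rw [MeasureTheory.integral_const_mul, integral_exp_shift hc]
    congr 1
    field_simp
  rw [← h2]; exact h1

/-- lower bound for `I = hbar`. -/
private lemma I_ge {m : ℕ} (ht : 0 < t) (hm : 1 ≤ m) (hρ1 : 1 ≤ ρ) :
    Real.sinh ρ / Real.sqrt (Real.sinh (ρ+1)) * ((ρ+1)/(t*Real.sinh (ρ+1)))^m *
        Real.exp (-(ρ^2+3)/(2*t)) * (2 * Real.sqrt (1/ρ))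
      ≤ ∫ s in Set.Ioi ρ, gm m t ρ s := by
  have hρ0 : (0:ℝ) < ρ := by linarith
  have hS : 0 < Real.sinh ρ := by have := Real.self_lt_sinh_iff.2 hρ0; linarith
  have hS1 : 0 < Real.sinh (ρ+1) := by
    have := Real.self_lt_sinh_iff.2 (show (0:ℝ) < ρ+1 by linarith); linarith
  set K := Real.sinh ρ / Real.sqrt (Real.sinh (ρ+1)) * ((ρ+1)/(t*Real.sinh (ρ+1)))^m *
      Real.exp (-(ρ^2+3)/(2*t)) with hK
  have hK0 : 0 ≤ K := by rw [hK]; positivity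
  have hrint : MeasureTheory.IntegrableOn (fun s : ℝ => K * (s - ρ) ^ (-(1/2) : ℝ))
      (Set.Ioo ρ (ρ + 1/ρ)) := by
    exact ((rpow_half_integrableOn ρ (1/ρ) (by positivity)).mono_set
      Set.Ioo_subset_Ioc_self).const_mul K
  have hgint : MeasureTheory.IntegrableOn (gm m t ρ) (Set.Ioo ρ (ρ + 1/ρ)) :=
    (integrableOn_gm ht hm hρ1).mono_set (Set.Ioo_subset_Ioi_self)
  have step1 : ∫ s in Set.Ioo ρ (ρ + 1/ρ), K * (s - ρ) ^ (-(1/2) : ℝ)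
      = K * (2 * Real.sqrt (1/ρ)) := by
    rw [MeasureTheory.integral_const_mul, integral_rpow_half (by positivity)]
  have step2 : ∫ s in Set.Ioo ρ (ρ + 1/ρ), K * (s - ρ) ^ (-(1/2) : ℝ)
      ≤ ∫ s in Set.Ioo ρ (ρ + 1/ρ), gm m t ρ s := by
    apply MeasureTheory.setIntegral_mono_on hrint hgint measurableSet_Ioo
    intro s hs
    have hs1 : ρ < s := hs.1
    have hs2 : s < ρ + 1/ρ := hs.2
    have hsp : 0 < s - ρ := by linarith
    have hrw : (s - ρ) ^ (-(1/2) : ℝ) = 1 / Real.sqrt (s - ρ) := by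
      rw [Real.rpow_neg hsp.le, Real.sqrt_eq_rpow]; norm_num
    have := gm_ge (m := m) ht hρ1 hs1 hs2
    rw [hK, hrw]
    calc Real.sinh ρ / Real.sqrt (Real.sinh (ρ+1)) * ((ρ+1)/(t*Real.sinh (ρ+1)))^m *
          Real.exp (-(ρ^2+3)/(2*t)) * (1 / Real.sqrt (s - ρ))
        = Real.sinh ρ / (Real.sqrt (s - ρ) * Real.sqrt (Real.sinh (ρ+1))) *
          ((ρ+1)/(t*Real.sinh (ρ+1)))^m * Real.exp (-(ρ^2+3)/(2*t)) := by
          field_simp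
      _ ≤ gm m t ρ s := this
  have step3 : ∫ s in Set.Ioo ρ (ρ + 1/ρ), gm m t ρ s ≤ ∫ s in Set.Ioi ρ, gm m t ρ s := by
    apply MeasureTheory.setIntegral_mono_set (integrableOn_gm ht hm hρ1)
    · filter_upwards [MeasureTheory.ae_restrict_mem measurableSet_Ioi] with s hs
      exact gm_nonneg ht hρ0 hs
    · exact HasSubset.Subset.eventuallyLE Set.Ioo_subset_Ioi_self
  calc K * (2 * Real.sqrt (1/ρ)) = ∫ s in Set.Ioo ρ (ρ + 1/ρ), K * (s - ρ) ^ (-(1/2) : ℝ) :=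
        step1.symm
    _ ≤ ∫ s in Set.Ioo ρ (ρ + 1/ρ), gm m t ρ s := step2
    _ ≤ ∫ s in Set.Ioi ρ, gm m t ρ s := step3

end intbounds
section compare

variable {t ρ : ℝ}

set_option maxHeartbeats 1000000 in
private lemma Aup_le_Blow (m' : ℕ) (ht : 0 < t) (hρ1 : 1 ≤ ρ) :
    (ρ^(m'+1) * ((m'+1).factorial : ℝ) * Real.exp 1 * (2*t+1) * Real.exp (-ρ^2/(2*t)) /
        (2 * Real.sqrt ρ * Real.sqrt (Real.sinh ρ) * t^(m'+1) * Real.sinh ρ ^ m')) * (4*t/ρ)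
    ≤ (((m'+1).factorial : ℝ) * Real.exp 1 * (2*t+1) * t * Real.exp (3/(2*t)) * 6^(m'+1) * 3 / ρ) *
      (Real.sinh ρ / Real.sqrt (Real.sinh (ρ+1)) * ((ρ+1)/(t*Real.sinh (ρ+1)))^(m'+1) *
        Real.exp (-(ρ^2+3)/(2*t)) * (2 * Real.sqrt (1/ρ))) := by
  have hρ0 : (0:ℝ) < ρ := by linarith
  have hS : 0 < Real.sinh ρ := by have := Real.self_lt_sinh_iff.2 hρ0; linarith
  have hS1 : 0 < Real.sinh (ρ+1) := by
    have := Real.self_lt_sinh_iff.2 (show (0:ℝ) < ρ+1 by linarith); linarith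
  have haρ : 0 < Real.sqrt ρ := Real.sqrt_pos.2 hρ0
  have haS : 0 < Real.sqrt (Real.sinh ρ) := Real.sqrt_pos.2 hS
  have haS1 : 0 < Real.sqrt (Real.sinh (ρ+1)) := Real.sqrt_pos.2 hS1
  have hE : Real.exp (-ρ^2/(2*t)) = Real.exp (3/(2*t)) * Real.exp (-(ρ^2+3)/(2*t)) := by
    rw [← Real.exp_add]; congr 1; field_simp; try ring
  have hsq1ρ : Real.sqrt (1/ρ) = 1/Real.sqrt ρ := by
    rw [one_div, Real.sqrt_inv, one_div]
  have h6 : Real.sinh (ρ+1) ^ (m'+1) ≤ 6^(m'+1) * Real.sinh ρ ^ (m'+1) := by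
    rw [← mul_pow]
    exact pow_le_pow_left₀ hS1.le (sinh_succ_le hρ1) _
  have h3 : Real.sqrt (Real.sinh (ρ+1)) ≤ 3 * Real.sqrt (Real.sinh ρ) := sqrt_sinh_succ_le hρ1
  have hρm : ρ^(m'+1) ≤ (ρ+1)^(m'+1) := pow_le_pow_left₀ hρ0.le (by linarith) _
  set E := Real.exp (-(ρ^2+3)/(2*t)) with hE'
  have hE0 : 0 < E := Real.exp_pos _
  have eL : (ρ^(m'+1) * ((m'+1).factorial : ℝ) * Real.exp 1 * (2*t+1) * Real.exp (-ρ^2/(2*t)) /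
        (2 * Real.sqrt ρ * Real.sqrt (Real.sinh ρ) * t^(m'+1) * Real.sinh ρ ^ m')) * (4*t/ρ)
      = (ρ^(m'+1) * ((m'+1).factorial : ℝ) * Real.exp 1 * (2*t+1) * Real.exp (3/(2*t)) * E
          * 4 * t) /
        (2 * Real.sqrt ρ * Real.sqrt (Real.sinh ρ) * t^(m'+1) * Real.sinh ρ ^ m' * ρ) := by
    rw [hE]; field_simp
  have eR : (((m'+1).factorial : ℝ) * Real.exp 1 * (2*t+1) * t * Real.exp (3/(2*t)) * 6^(m'+1)
        * 3 / ρ) *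
      (Real.sinh ρ / Real.sqrt (Real.sinh (ρ+1)) * ((ρ+1)/(t*Real.sinh (ρ+1)))^(m'+1) *
        E * (2 * Real.sqrt (1/ρ)))
      = (((m'+1).factorial : ℝ) * Real.exp 1 * (2*t+1) * t * Real.exp (3/(2*t)) * 6^(m'+1) * 3
          * Real.sinh ρ * (ρ+1)^(m'+1) * E * 2) /
        (ρ * Real.sqrt (Real.sinh (ρ+1)) * (t^(m'+1) * Real.sinh (ρ+1)^(m'+1)) * Real.sqrt ρ)
      := by
    rw [hsq1ρ, div_pow, mul_pow]
    field_simp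
  rw [eL, eR, div_le_div_iff₀ (by positivity) (by positivity)]
  have key : ρ^(m'+1) * (Real.sqrt (Real.sinh (ρ+1)) * Real.sinh (ρ+1)^(m'+1))
      ≤ (ρ+1)^(m'+1) * (3 * Real.sqrt (Real.sinh ρ) * (6^(m'+1) * Real.sinh ρ ^ (m'+1))) := by
    calc ρ^(m'+1) * (Real.sqrt (Real.sinh (ρ+1)) * Real.sinh (ρ+1)^(m'+1))
        ≤ (ρ+1)^(m'+1) * ((3 * Real.sqrt (Real.sinh ρ)) * (6^(m'+1) * Real.sinh ρ ^ (m'+1)))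
          := by
          apply mul_le_mul hρm (mul_le_mul h3 h6 (by positivity) (by positivity))
            (by positivity) (by positivity)
      _ = _ := by ring
  calc ρ^(m'+1) * ((m'+1).factorial : ℝ) * Real.exp 1 * (2*t+1) * Real.exp (3/(2*t)) * E * 4 * t
        * (ρ * Real.sqrt (Real.sinh (ρ+1)) * (t^(m'+1) * Real.sinh (ρ+1)^(m'+1)) * Real.sqrt ρ)
      = (((m'+1).factorial : ℝ) * Real.exp 1 * (2*t+1) * Real.exp (3/(2*t)) * E * 4 * t * ρ
          * t^(m'+1) * Real.sqrt ρ) *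
        (ρ^(m'+1) * (Real.sqrt (Real.sinh (ρ+1)) * Real.sinh (ρ+1)^(m'+1))) := by ring
    _ ≤ (((m'+1).factorial : ℝ) * Real.exp 1 * (2*t+1) * Real.exp (3/(2*t)) * E * 4 * t * ρ
          * t^(m'+1) * Real.sqrt ρ) *
        ((ρ+1)^(m'+1) * (3 * Real.sqrt (Real.sinh ρ) * (6^(m'+1) * Real.sinh ρ ^ (m'+1)))) := by
        apply mul_le_mul_of_nonneg_left key (by positivity)
    _ = ((m'+1).factorial : ℝ) * Real.exp 1 * (2*t+1) * t * Real.exp (3/(2*t)) * 6^(m'+1) * 3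
          * Real.sinh ρ * (ρ+1)^(m'+1) * E * 2 *
        (2 * Real.sqrt ρ * Real.sqrt (Real.sinh ρ) * t^(m'+1) * Real.sinh ρ ^ m' * ρ) := by
        ring

end compare

private lemma hbar_eq_int (m : ℕ) (t ρ : ℝ) :
    hbar m t ρ = ∫ s in Set.Ioi ρ, gm m t ρ s := rfl

set_option maxHeartbeats 1000000 in
/-- For every `m ≥ 1` and `t > 0`,
`(t sinh ρ · h̄_t^(m+1)(ρ)) / (ρ · h̄_t^(m)(ρ)) → 1` as `ρ → +∞`. -/
theorem hbar_ratio_tendsto_one (m : ℕ) (hm : 1 ≤ m) (t : ℝ) (ht : 0 < t) :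
    Tendsto (fun ρ : ℝ => (t * Real.sinh ρ * hbar (m + 1) t ρ) / (ρ * hbar m t ρ))
      atTop (nhds 1) := by
  obtain ⟨m', rfl⟩ : ∃ m', m = m' + 1 := ⟨m - 1, (Nat.succ_pred_eq_of_pos hm).symm⟩
  set C := ((m'+1).factorial : ℝ) * Real.exp 1 * (2*t+1) * t * Real.exp (3/(2*t)) * 6^(m'+1) * 3
    with hC
  have hC0 : 0 ≤ C := by rw [hC]; positivity
  have hblds : ∀ᶠ ρ : ℝ in atTop,
      (1 - Real.exp (-(2*ρ))) * (1 - C/ρ)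
        ≤ (t * Real.sinh ρ * hbar (m' + 1 + 1) t ρ) / (ρ * hbar (m' + 1) t ρ) ∧
      (t * Real.sinh ρ * hbar (m' + 1 + 1) t ρ) / (ρ * hbar (m' + 1) t ρ) ≤ 1 := by
    filter_upwards [eventually_ge_atTop (1:ℝ), eventually_ge_atTop (2*t)] with ρ hρ1 hρt
    have hρ0 : (0:ℝ) < ρ := by linarith
    have hS : 0 < Real.sinh ρ := by have := Real.self_lt_sinh_iff.2 hρ0; linarith
    have hS1 : 0 < Real.sinh (ρ+1) := by
      have := Real.self_lt_sinh_iff.2 (show (0:ℝ) < ρ+1 by linarith); linarith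
    have hm1 : 1 ≤ m' + 1 := Nat.le_add_left 1 m'
    have hm2 : 1 ≤ m' + 1 + 1 := by omega
    set I := ∫ s in Set.Ioi ρ, gm (m'+1) t ρ s with hI
    set N := ∫ s in Set.Ioi ρ, gm (m'+1) t ρ s * (s - ρ) with hN
    have hIble := I_ge (m := m'+1) ht hm1 hρ1
    have hBpos : 0 < Real.sinh ρ / Real.sqrt (Real.sinh (ρ+1)) *
        ((ρ+1)/(t*Real.sinh (ρ+1)))^(m'+1) * Real.exp (-(ρ^2+3)/(2*t)) *
        (2 * Real.sqrt (1/ρ)) := by positivity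
    have hI0 : 0 < I := lt_of_lt_of_le hBpos hIble
    have hN0 : 0 ≤ N := by
      apply MeasureTheory.setIntegral_nonneg measurableSet_Ioi
      intro s hs
      have hs' : ρ < s := hs
      exact mul_nonneg (gm_nonneg ht hρ0 hs') (by linarith)
    have hNC : N ≤ C/ρ * I := by
      calc N ≤ (ρ^(m'+1) * ((m'+1).factorial : ℝ) * Real.exp 1 * (2*t+1) *
            Real.exp (-ρ^2/(2*t)) /
            (2 * Real.sqrt ρ * Real.sqrt (Real.sinh ρ) * t^(m'+1) * Real.sinh ρ ^ m')) *
            (4*t/ρ) := N_le ht hρ1 hρt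
        _ ≤ (C / ρ) * (Real.sinh ρ / Real.sqrt (Real.sinh (ρ+1)) *
            ((ρ+1)/(t*Real.sinh (ρ+1)))^(m'+1) * Real.exp (-(ρ^2+3)/(2*t)) *
            (2 * Real.sqrt (1/ρ))) := Aup_le_Blow m' ht hρ1
        _ ≤ C/ρ * I := by
            apply mul_le_mul_of_nonneg_left hIble (by positivity)
    -- pointwise splitting of the (m+1) integrand
    have hsplit : ∀ s : ℝ, gm (m'+1+1) t ρ s = gm (m'+1) t ρ s * (s/(t*Real.sinh s)) := by
      intro s
      unfold gm
      rw [pow_succ]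
      ring
    have hexp2ρ : Real.exp (-(2*ρ)) ≤ 1 := by
      have h := Real.exp_le_exp.2 (show -(2*ρ) ≤ 0 by linarith)
      rwa [Real.exp_zero] at h
    -- upper bound
    have hup : hbar (m'+1+1) t ρ ≤ ρ/(t*Real.sinh ρ) * I := by
      rw [hbar_eq_int]
      have hmono : (∫ s in Set.Ioi ρ, gm (m'+1+1) t ρ s)
          ≤ ∫ s in Set.Ioi ρ, (ρ/(t*Real.sinh ρ)) * gm (m'+1) t ρ s := by
        apply MeasureTheory.setIntegral_mono_on (integrableOn_gm ht hm2 hρ1)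
          ((integrableOn_gm ht hm1 hρ1).const_mul _) measurableSet_Ioi
        intro s hs
        have hs' : ρ < s := hs
        have hss : 0 < Real.sinh s := by
          have := Real.self_lt_sinh_iff.2 (hρ0.trans hs'); linarith
        have hφ : s/(t*Real.sinh s) ≤ ρ/(t*Real.sinh ρ) := by
          rw [div_le_div_iff₀ (by positivity) (by positivity)]
          have := phi_anti hρ1 hs'.le
          nlinarith
        rw [hsplit s]
        calc gm (m'+1) t ρ s * (s/(t*Real.sinh s))
            ≤ gm (m'+1) t ρ s * (ρ/(t*Real.sinh ρ)) := by
              apply mul_le_mul_of_nonneg_left hφ (gm_nonneg ht hρ0 hs')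
          _ = (ρ/(t*Real.sinh ρ)) * gm (m'+1) t ρ s := by ring
      rw [MeasureTheory.integral_const_mul] at hmono
      exact hmono
    -- lower bound
    have hlo : ρ/(t*Real.sinh ρ) * ((1 - Real.exp (-(2*ρ))) * (I - N))
        ≤ hbar (m'+1+1) t ρ := by
      rw [hbar_eq_int]
      have hKnn : 0 ≤ ρ/(t*Real.sinh ρ) * (1 - Real.exp (-(2*ρ))) := by
        apply mul_nonneg (by positivity); linarith
      have hintI := integrableOn_gm (m := m'+1) ht hm1 hρ1
      have hintN := integrableOn_gm_mul_sub (m := m'+1) ht hm1 hρ1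
      have hmono : (∫ s in Set.Ioi ρ, (ρ/(t*Real.sinh ρ) * (1 - Real.exp (-(2*ρ)))) *
            (gm (m'+1) t ρ s - gm (m'+1) t ρ s * (s - ρ)))
          ≤ ∫ s in Set.Ioi ρ, gm (m'+1+1) t ρ s := by
        apply MeasureTheory.setIntegral_mono_on
          ((hintI.sub hintN).const_mul _) (integrableOn_gm ht hm2 hρ1) measurableSet_Ioi
        intro s hs
        have hs' : ρ < s := hs
        have hg0 : 0 ≤ gm (m'+1) t ρ s := gm_nonneg ht hρ0 hs'
        have hphiL := phi_lower ht hρ0 hs'.le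
        have h1u : 1 - (s-ρ) ≤ Real.exp (ρ - s) := by
          have := Real.add_one_le_exp (ρ - s); linarith
        have hkey : ρ/(t*Real.sinh ρ) * (1 - Real.exp (-(2*ρ))) * (1 - (s-ρ))
            ≤ s/(t*Real.sinh s) := by
          calc ρ/(t*Real.sinh ρ) * (1 - Real.exp (-(2*ρ))) * (1 - (s-ρ))
              ≤ ρ/(t*Real.sinh ρ) * (1 - Real.exp (-(2*ρ))) * Real.exp (ρ - s) := by
                apply mul_le_mul_of_nonneg_left h1u hKnn
            _ = ρ/(t*Real.sinh ρ) * ((1 - Real.exp (-(2*ρ))) * Real.exp (ρ - s)) := by ring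
            _ ≤ s/(t*Real.sinh s) := hphiL
        rw [hsplit s]
        calc (ρ/(t*Real.sinh ρ) * (1 - Real.exp (-(2*ρ)))) *
              (gm (m'+1) t ρ s - gm (m'+1) t ρ s * (s - ρ))
            = (ρ/(t*Real.sinh ρ) * (1 - Real.exp (-(2*ρ))) * (1 - (s-ρ))) *
              gm (m'+1) t ρ s := by ring
          _ ≤ (s/(t*Real.sinh s)) * gm (m'+1) t ρ s := by
              apply mul_le_mul_of_nonneg_right hkey hg0
          _ = gm (m'+1) t ρ s * (s/(t*Real.sinh s)) := by ring
      rw [MeasureTheory.integral_const_mul, MeasureTheory.integral_sub hintI hintN] at hmono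
      calc ρ/(t*Real.sinh ρ) * ((1 - Real.exp (-(2*ρ))) * (I - N))
          = ρ/(t*Real.sinh ρ) * (1 - Real.exp (-(2*ρ))) * (I - N) := by ring
        _ ≤ ∫ s in Set.Ioi ρ, gm (m'+1+1) t ρ s := hmono
    -- conclude the two ratio bounds
    have hId : hbar (m'+1) t ρ = I := hbar_eq_int _ _ _
    constructor
    · rw [hId, le_div_iff₀ (by positivity)]
      calc (1 - Real.exp (-(2*ρ))) * (1 - C/ρ) * (ρ * I)
          = ρ/(t*Real.sinh ρ) * ((1 - Real.exp (-(2*ρ))) * (I - C/ρ * I)) * (t*Real.sinh ρ)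
            := by field_simp
        _ ≤ ρ/(t*Real.sinh ρ) * ((1 - Real.exp (-(2*ρ))) * (I - N)) * (t*Real.sinh ρ) := by
            apply mul_le_mul_of_nonneg_right _ (by positivity)
            apply mul_le_mul_of_nonneg_left _ (by positivity)
            apply mul_le_mul_of_nonneg_left _ (by linarith)
            linarith
        _ ≤ hbar (m'+1+1) t ρ * (t*Real.sinh ρ) := by
            apply mul_le_mul_of_nonneg_right hlo (by positivity)
        _ = t * Real.sinh ρ * hbar (m'+1+1) t ρ := by ring
    · rw [hId, div_le_one (by positivity)]
      calc t * Real.sinh ρ * hbar (m'+1+1) t ρ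
          ≤ t * Real.sinh ρ * (ρ/(t*Real.sinh ρ) * I) := by
            apply mul_le_mul_of_nonneg_left hup (by positivity)
        _ = ρ * I := by field_simp
  -- the squeeze
  have hexp : Tendsto (fun ρ : ℝ => Real.exp (-(2*ρ))) atTop (nhds 0) := by
    have h2ρ : Tendsto (fun ρ : ℝ => 2*ρ) atTop atTop :=
      Filter.Tendsto.const_mul_atTop two_pos Filter.tendsto_id
    exact Real.tendsto_exp_neg_atTop_nhds_zero.comp h2ρ
  have hCρ : Tendsto (fun ρ : ℝ => C/ρ) atTop (nhds 0) :=
    Filter.Tendsto.div_atTop tendsto_const_nhds Filter.tendsto_id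
  have hL : Tendsto (fun ρ : ℝ => (1 - Real.exp (-(2*ρ))) * (1 - C/ρ)) atTop (nhds 1) := by
    have h1 : Tendsto (fun ρ : ℝ => 1 - Real.exp (-(2*ρ))) atTop (nhds (1 - 0)) :=
      Tendsto.sub (tendsto_const_nhds : Tendsto (fun _ : ℝ => (1:ℝ)) atTop (nhds 1)) hexp
    have h2 : Tendsto (fun ρ : ℝ => 1 - C/ρ) atTop (nhds (1 - 0)) :=
      Tendsto.sub (tendsto_const_nhds : Tendsto (fun _ : ℝ => (1:ℝ)) atTop (nhds 1)) hCρ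
    have := h1.mul h2
    simpa using this
  exact tendsto_of_tendsto_of_tendsto_of_le_of_le' hL tendsto_const_nhds
    (hblds.mono fun ρ h => h.1) (hblds.mono fun ρ h => h.2)
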